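/- For every real R ≥ 1 and every γ ∈ [0,1), the integral ∫₀^R δ^{−γ/2} √(log(1 + δ^{−1})) dδ is at most 4R. -/

import Mathlib

open MeasureTheory

lemma log_one_add_sq_le (t : ℝ) (ht : 0 ≤ t) : Real.log (1 + t ^ 2) ≤ t := by
  have hd : ∀ x : ℝ, HasDerivAt (fun x : ℝ => x - Real.log (1 + x ^ 2))
      (1 - (1 + x ^ 2)⁻¹ * (2 * x)) x := by
    intro x
    have hpos : (0:ℝ) < 1 + x ^ 2 := by positivity
    have hg : HasDerivAt (fun x : ℝ => 1 + x ^ 2) (2 * x) x := by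
      simpa using ((hasDerivAt_pow 2 x).const_add 1)
    have hlog := (Real.hasDerivAt_log hpos.ne').comp x hg
    exact (hasDerivAt_id' x).sub hlog
  have hmono : Monotone (fun x : ℝ => x - Real.log (1 + x ^ 2)) := by
    apply monotone_of_deriv_nonneg
    · exact fun x => (hd x).differentiableAt
    · intro x
      rw [(hd x).deriv]
      have hpos : (0:ℝ) < 1 + x ^ 2 := by positivity
      have heq : (1 + x ^ 2)⁻¹ * (2 * x) = 2 * x / (1 + x ^ 2) := by ring
      rw [heq, sub_nonneg, div_le_one hpos]
      nlinarith [sq_nonneg (x - 1)]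
  have h0 := hmono ht
  simpa using h0

lemma log_one_add_le_sqrt (x : ℝ) (hx : 0 ≤ x) : Real.log (1 + x) ≤ Real.sqrt x := by
  have := log_one_add_sq_le (Real.sqrt x) (Real.sqrt_nonneg x)
  rwa [Real.sq_sqrt hx] at this

/-- For every real `R ≥ 1` and every `γ ∈ [0,1)`, the integral
`∫₀^R δ^(−γ/2) √(log(1 + δ⁻¹)) dδ` is at most `4R`. -/
theorem entropy_integral_le_four_mul :
    ∀ R : ℝ, 1 ≤ R → ∀ γ : ℝ, 0 ≤ γ → γ < 1 →
      (∫ δ in Set.Ioc (0 : ℝ) R, δ ^ (-(γ / 2)) * Real.sqrt (Real.log (1 + δ⁻¹))) ≤ 4 * R := by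
  intro R hR γ hγ0 hγ1
  have hR0 : (0:ℝ) < R := lt_of_lt_of_le one_pos hR
  obtain ⟨p, hp⟩ : ∃ p : ℝ, p = -(γ / 2 + 1 / 4) := ⟨_, rfl⟩
  have hp1 : (-1:ℝ) < p := by rw [hp]; linarith
  have hpp : (0:ℝ) < p + 1 := by rw [hp]; linarith
  have hpq : (1:ℝ)/4 < p + 1 := by rw [hp]; linarith
  have hple : p + 1 ≤ 1 := by rw [hp]; linarith
  -- integrability of the dominating function
  have hint : IntegrableOn (fun δ : ℝ => δ ^ p) (Set.Ioc 0 R) := by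
    have h := intervalIntegral.intervalIntegrable_rpow' (a := 0) (b := R) hp1
    rwa [intervalIntegrable_iff_integrableOn_Ioc_of_le hR0.le] at h
  -- pointwise bound
  have hbound : ∀ δ ∈ Set.Ioc (0:ℝ) R,
      δ ^ (-(γ / 2)) * Real.sqrt (Real.log (1 + δ⁻¹)) ≤ δ ^ p := by
    intro δ hδ
    have hδ0 : (0:ℝ) < δ := hδ.1
    have hinv : (0:ℝ) ≤ δ⁻¹ := by positivity
    have h1 : Real.sqrt (Real.log (1 + δ⁻¹)) ≤ Real.sqrt (Real.sqrt δ⁻¹) :=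
      Real.sqrt_le_sqrt (log_one_add_le_sqrt _ hinv)
    have h2 : Real.sqrt (Real.sqrt δ⁻¹) = δ ^ (-(1/4) : ℝ) := by
      rw [Real.sqrt_eq_rpow, Real.sqrt_eq_rpow, ← Real.rpow_mul hinv,
        Real.inv_rpow hδ0.le, ← Real.rpow_neg hδ0.le]
      norm_num
    calc δ ^ (-(γ / 2)) * Real.sqrt (Real.log (1 + δ⁻¹))
        ≤ δ ^ (-(γ / 2)) * (δ ^ (-(1/4) : ℝ)) := by
          apply mul_le_mul_of_nonneg_left _ (Real.rpow_nonneg hδ0.le _)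
          rw [← h2]; exact h1
      _ = δ ^ p := by
          rw [← Real.rpow_add hδ0, hp]; ring_nf
  -- compare integrals
  have hmono : (∫ δ in Set.Ioc (0 : ℝ) R, δ ^ (-(γ / 2)) * Real.sqrt (Real.log (1 + δ⁻¹)))
      ≤ ∫ δ in Set.Ioc (0 : ℝ) R, δ ^ p := by
    apply integral_mono_of_nonneg
    · filter_upwards [ae_restrict_mem measurableSet_Ioc] with δ hδ
      have hδ0 : (0:ℝ) < δ := hδ.1
      positivity
    · exact hint
    · filter_upwards [ae_restrict_mem measurableSet_Ioc] with δ hδ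
      exact hbound δ hδ
  -- evaluate the dominating integral
  have hval : (∫ δ in Set.Ioc (0 : ℝ) R, δ ^ p) = R ^ (p + 1) / (p + 1) := by
    rw [← intervalIntegral.integral_of_le hR0.le, integral_rpow (Or.inl hp1),
      Real.zero_rpow hpp.ne']
    ring
  have hRle : R ^ (p + 1) ≤ R := by
    calc R ^ (p + 1) ≤ R ^ (1:ℝ) := Real.rpow_le_rpow_of_exponent_le hR hple
      _ = R := Real.rpow_one R
  calc (∫ δ in Set.Ioc (0 : ℝ) R, δ ^ (-(γ / 2)) * Real.sqrt (Real.log (1 + δ⁻¹)))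
      ≤ R ^ (p + 1) / (p + 1) := by rw [← hval]; exact hmono
    _ ≤ 4 * R := by rw [div_le_iff₀ hpp]; nlinarith [mul_pos hR0 (show (0:ℝ) < 4 * (p + 1) - 1 by linarith)]
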